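/- For any two nodes u and v in a connected graph G with n vertices, and any shortest path P between u and v, the sum of the degrees of the vertices on P is at most 3n. -/

import Mathlib

open SimpleGraph Finset

/-- A walk has an initial segment of length `min i p.length` ending at `p.getVert i`. -/
lemma exists_walk_take {V : Type*} {G : SimpleGraph V} {u v : V} (p : G.Walk u v) (i : ℕ) :
    ∃ q : G.Walk u (p.getVert i), q.length = min i p.length := by
  induction p generalizing i with
  | nil => exact ⟨SimpleGraph.Walk.nil, by simp [SimpleGraph.Walk.getVert]⟩
  | cons h q ih =>
    cases i with
    | zero => exact ⟨SimpleGraph.Walk.nil, by simp [SimpleGraph.Walk.getVert]⟩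
    | succ i =>
      obtain ⟨q', hq'⟩ := ih i
      exact ⟨SimpleGraph.Walk.cons h q', by
        simp only [SimpleGraph.Walk.length_cons, hq', SimpleGraph.Walk.length_cons]
        show q'.length + 1 = min (i + 1) (q.length + 1)
        omega⟩

/-- A walk has a final segment of length `p.length - i` starting at `p.getVert i`. -/
lemma exists_walk_drop {V : Type*} {G : SimpleGraph V} {u v : V} (p : G.Walk u v) (i : ℕ) :
    ∃ r : G.Walk (p.getVert i) v, r.length = p.length - i := by
  induction p generalizing i with
  | nil => exact ⟨SimpleGraph.Walk.nil, by simp⟩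
  | cons h q ih =>
    cases i with
    | zero =>
      exact ⟨(SimpleGraph.Walk.cons h q).copy (SimpleGraph.Walk.getVert_zero _).symm rfl,
        by simp⟩
    | succ i =>
      obtain ⟨r, hr⟩ := ih i
      exact ⟨r, by simp only [SimpleGraph.Walk.length_cons, hr]; show r.length = q.length + 1 - (i + 1); omega⟩

lemma dist_le_getVert {V : Type*} {G : SimpleGraph V} {u v : V} (p : G.Walk u v) (i : ℕ) :
    G.dist u (p.getVert i) ≤ i := by
  obtain ⟨q, hq⟩ := exists_walk_take p i
  calc G.dist u (p.getVert i) ≤ q.length := SimpleGraph.dist_le q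
  _ = min i p.length := hq
  _ ≤ i := min_le_left _ _

lemma getVert_dist_le {V : Type*} {G : SimpleGraph V} {u v : V} (p : G.Walk u v) (i : ℕ) :
    G.dist (p.getVert i) v ≤ p.length - i := by
  obtain ⟨r, hr⟩ := exists_walk_drop p i
  exact hr ▸ SimpleGraph.dist_le r

/-- On a shortest walk, indices grow at most as fast as distances. -/
lemma index_le_of_shortest {V : Type*} {G : SimpleGraph V} (hconn : G.Connected)
    {u v : V} {p : G.Walk u v} (hshort : p.length = G.dist u v)
    {i j : ℕ} (hj : j ≤ p.length) :
    j ≤ i + G.dist (p.getVert i) (p.getVert j) := by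
  have h1 : G.dist u v ≤ G.dist u (p.getVert i) + G.dist (p.getVert i) v :=
    hconn.dist_triangle
  have h2 : G.dist (p.getVert i) v ≤ G.dist (p.getVert i) (p.getVert j)
      + G.dist (p.getVert j) v := hconn.dist_triangle
  have h3 := dist_le_getVert p i
  have h4 := getVert_dist_le p j
  omega

/-- The sum of the degrees of the vertices on a shortest path between two nodes
of a connected `n`-vertex graph is at most `3 n`. -/
theorem shortest_path_degree_sum {V : Type*} [Fintype V] [DecidableEq V]
    (G : SimpleGraph V) [DecidableRel G.Adj] (hconn : G.Connected)
    (u v : V) (p : G.Walk u v) (hshort : p.length = G.dist u v) :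
    (p.support.map (fun x => G.degree x)).sum ≤ 3 * Fintype.card V := by
  classical
  have hpath : p.IsPath := p.isPath_of_length_eq_dist hshort
  have hnodup : p.support.Nodup := hpath.support_nodup
  -- index of a vertex in the support
  have hidx : ∀ x ∈ p.support, ∃ n, p.getVert n = x ∧ n ≤ p.length := fun x hx =>
    SimpleGraph.Walk.mem_support_iff_exists_getVert.mp hx
  choose idx hidx1 hidx2 using hidx
  -- key: for any w, at most 3 support vertices are adjacent to w
  have key : ∀ w : V, ((p.support.toFinset.filter (fun x => G.Adj w x)).card ≤ 3) := by
    intro w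
    set S := p.support.toFinset.filter (fun x => G.Adj w x) with hS
    rcases S.eq_empty_or_nonempty with h | h
    · simp [h]
    · -- map to indices
      have hmemS : ∀ x ∈ S, x ∈ p.support := by
        intro x hx
        rw [hS, Finset.mem_filter, List.mem_toFinset] at hx
        exact hx.1
      set g : {x // x ∈ S} → ℕ := fun x => idx x.1 (hmemS x.1 x.2) with hg
      have hinj : Function.Injective g := by
        intro a b hab
        have h1 := hidx1 a.1 (hmemS a.1 a.2)
        have h2 := hidx1 b.1 (hmemS b.1 b.2)
        have : p.getVert (g a) = p.getVert (g b) := congrArg p.getVert hab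
        rw [hg] at this
        simp only at this
        rw [h1, h2] at this
        exact Subtype.ext this
      have hclose : ∀ (a b : {x // x ∈ S}), g a ≤ g b + 2 := by
        intro a b
        have hax : G.Adj w a.1 := (Finset.mem_filter.mp a.2).2
        have hay : G.Adj w b.1 := (Finset.mem_filter.mp b.2).2
        have hdxy : G.dist b.1 a.1 ≤ 2 := by
          calc G.dist b.1 a.1 ≤ G.dist b.1 w + G.dist w a.1 := hconn.dist_triangle
          _ ≤ 1 + 1 := by
              gcongr
              · rw [SimpleGraph.dist_comm]
                exact (SimpleGraph.dist_le (hay.toWalk)).trans (by simp)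
              · exact (SimpleGraph.dist_le (hax.toWalk)).trans (by simp)
          _ = 2 := rfl
        have := index_le_of_shortest hconn hshort (i := g b) (j := g a)
          (hidx2 a.1 (hmemS a.1 a.2))
        rw [hg] at this
        simp only at this
        rw [hidx1 a.1 (hmemS a.1 a.2), hidx1 b.1 (hmemS b.1 b.2)] at this
        rw [hg]
        simp only
        omega
      obtain ⟨x₀, hx₀⟩ := h
      have hcard : S.card = (S.attach.image g).card := by
        rw [Finset.card_image_of_injective _ hinj, Finset.card_attach]
      have himg : (S.attach.image g).Nonempty :=
        Finset.Nonempty.image (Finset.attach_nonempty_iff.mpr ⟨x₀, hx₀⟩) _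
      obtain ⟨m, hm, hmin⟩ := (S.attach.image g).exists_min_image id himg
      simp only [Finset.mem_image, Finset.mem_attach, true_and] at hm
      obtain ⟨b, hbm⟩ := hm
      have hsubm : S.attach.image g ⊆ Finset.Icc m (m + 2) := by
        intro n hn
        have hge := hmin n hn
        simp only [id] at hge
        simp only [Finset.mem_image, Finset.mem_attach, true_and] at hn
        obtain ⟨a, rfl⟩ := hn
        have := hclose a b
        simp only [Finset.mem_Icc]
        omega
      calc S.card = _ := hcard
        _ ≤ (Finset.Icc m (m + 2)).card := Finset.card_le_card hsubm
        _ = 3 := by rw [Nat.card_Icc]; omega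
  -- now sum up
  have hsum : (p.support.map (fun x => G.degree x)).sum
      = ∑ x ∈ p.support.toFinset, G.degree x :=
    (List.sum_toFinset _ hnodup).symm
  rw [hsum]
  calc ∑ x ∈ p.support.toFinset, G.degree x
      = ∑ x ∈ p.support.toFinset, (Finset.univ.filter (G.Adj x)).card := by
        refine Finset.sum_congr rfl fun x _ => ?_
        rw [← SimpleGraph.card_neighborFinset_eq_degree, SimpleGraph.neighborFinset_eq_filter]
    _ = ∑ x ∈ p.support.toFinset, ∑ w : V, (if G.Adj x w then 1 else 0) := by
        refine Finset.sum_congr rfl fun x _ => ?_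
        rw [Finset.card_filter]
    _ = ∑ w : V, ∑ x ∈ p.support.toFinset, (if G.Adj x w then 1 else 0) :=
        Finset.sum_comm
    _ = ∑ w : V, (p.support.toFinset.filter (fun x => G.Adj w x)).card := by
        refine Finset.sum_congr rfl fun w _ => ?_
        rw [Finset.card_filter]
        exact Finset.sum_congr rfl fun x _ => if_congr (G.adj_comm x w) rfl rfl
    _ ≤ ∑ _w : V, 3 := Finset.sum_le_sum fun w _ => key w
    _ = 3 * Fintype.card V := by rw [Finset.sum_const, smul_eq_mul, mul_comm, Fintype.card]
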